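/- Let f0, f1 be the automatic transformations of the Mealy automaton A₂, with products written so that (f g)(u) = f(g(u)). Then the following equalities of transformations of infinite words over Fin 4 hold: f0² f0 = f0² f1 = f0²; f0 f1² f0 = f0 f1² f1 = f0²; f1² f0² = f0 f1 f0²; f1 f0 f1 f0² = f1⁴ = f1³ f0; and (f1 f0)⁴ = (f1 f0)². -/
import Mathlib


/-- The sequence of states visited by a Mealy automaton with transition function `tr`,
started at state `q`, while reading the infinite word `u`. -/
def stateSeq {X Q : Type*} (tr : X → Q → Q) (q : Q) (u : ℕ → X) : ℕ → Q
  | 0 => q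
  | k + 1 => tr (u k) (stateSeq tr q u k)

/-- The automatic transformation of infinite words defined by the Mealy automaton with
transition function `tr` and output function `out` at the state `q`. -/
def autTrans {X Q : Type*} (tr : X → Q → Q) (out : X → Q → X) (q : Q) (u : ℕ → X) : ℕ → X :=
  fun n => out (u n) (stateSeq tr q u n)

/-- The transformation given by a word of states: the product (composition, applied from
right to left) of the corresponding automatic transformations. -/
def wordTrans {X Q : Type*} (tr : X → Q → Q) (out : X → Q → X) (w : List Q) :
    (ℕ → X) → (ℕ → X) :=
  (w.map (autTrans tr out)).foldr (· ∘ ·) id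

/-- The growth function of a Mealy automaton: `growth tr out n` is the number of distinct
transformations of infinite words obtained as compositions of exactly `n` automatic
transformations of the automaton. -/
noncomputable def growth {X Q : Type*} (tr : X → Q → Q) (out : X → Q → X) (n : ℕ) : ℕ :=
  Set.ncard { g : (ℕ → X) → (ℕ → X) | ∃ w : List Q, w.length = n ∧ wordTrans tr out w = g }

/-- The `i`-th finite difference of a function `γ`. -/
def fdiff (γ : ℕ → ℤ) : ℕ → ℕ → ℤ
  | 0, n => γ n
  | i + 1, n => fdiff γ i n - fdiff γ i (n - 1)

/-- Output function of the automaton `A₂`: at `q0` the outputs of `(x0,x1,x2,x3)` are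
`(x1,x1,x0,x0)`; at `q1` they are `(x0,x2,x0,x1)`. -/
def a2Out : Fin 4 → Fin 2 → Fin 4 := fun x q =>
  if q = 0 then (if x = 0 then 1 else if x = 1 then 1 else 0)
  else (if x = 0 then 0 else if x = 1 then 2 else if x = 2 then 0 else 1)

/-- Transition function of the automaton `A₂`: all transitions from `q0` stay at `q0`;
from `q1` the transition goes to `q0` on reading `x0` and stays at `q1` otherwise. -/
def a2Tr : Fin 4 → Fin 2 → Fin 2 := fun x q =>
  if q = 0 then 0 else (if x = 0 then 0 else 1)

/-- The automatic transformations `f0, f1` of the automaton `A₂` at states `q0, q1`. -/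
def a2F (q : Fin 2) : (ℕ → Fin 4) → (ℕ → Fin 4) := autTrans a2Tr a2Out q

def compTr {X Q1 Q2 : Type*} (tr1 : X → Q1 → Q1) (tr2 : X → Q2 → Q2)
    (out2 : X → Q2 → X) : X → Q1 × Q2 → Q1 × Q2 :=
  fun x p => (tr1 (out2 x p.2) p.1, tr2 x p.2)

def compOut {X Q1 Q2 : Type*} (out1 : X → Q1 → X) (out2 : X → Q2 → X) :
    X → Q1 × Q2 → X :=
  fun x p => out1 (out2 x p.2) p.1

lemma autTrans_comp {X Q1 Q2 : Type*} (tr1 : X → Q1 → Q1) (out1 : X → Q1 → X) (q1 : Q1)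
    (tr2 : X → Q2 → Q2) (out2 : X → Q2 → X) (q2 : Q2) :
    autTrans tr1 out1 q1 ∘ autTrans tr2 out2 q2 =
      autTrans (compTr tr1 tr2 out2) (compOut out1 out2) (q1, q2) := by
  funext u n
  have key : ∀ n, stateSeq (compTr tr1 tr2 out2) (q1, q2) u n =
      (stateSeq tr1 q1 (autTrans tr2 out2 q2 u) n, stateSeq tr2 q2 u n) := by
    intro n
    induction n with
    | zero => rfl
    | succ k ih => simp [stateSeq, ih, compTr, autTrans]
  simp [autTrans, key, compOut, Function.comp]

lemma bisim_list {X Q1 Q2 : Type*} (tr1 : X → Q1 → Q1) (out1 : X → Q1 → X) (q1 : Q1)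
    (tr2 : X → Q2 → Q2) (out2 : X → Q2 → X) (q2 : Q2)
    (L : List (Q1 × Q2)) (h0 : (q1, q2) ∈ L)
    (hstep : ∀ p ∈ L, ∀ x, out1 x p.1 = out2 x p.2 ∧ (tr1 x p.1, tr2 x p.2) ∈ L) :
    autTrans tr1 out1 q1 = autTrans tr2 out2 q2 := by
  funext u n
  have key : ∀ n, (stateSeq tr1 q1 u n, stateSeq tr2 q2 u n) ∈ L := by
    intro n
    induction n with
    | zero => exact h0
    | succ k ih => exact (hstep _ ih (u k)).2
  exact (hstep _ (key n) (u n)).1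

/-- The defining relations of the semigroup `S_{A₂}` hold among the automatic
transformations `f0, f1` of `A₂` (products composed from right to left). -/
theorem relations_a2 :
    a2F 0 ∘ a2F 0 ∘ a2F 0 = a2F 0 ∘ a2F 0 ∧
    a2F 0 ∘ a2F 0 ∘ a2F 1 = a2F 0 ∘ a2F 0 ∧
    a2F 0 ∘ a2F 1 ∘ a2F 1 ∘ a2F 0 = a2F 0 ∘ a2F 0 ∧
    a2F 0 ∘ a2F 1 ∘ a2F 1 ∘ a2F 1 = a2F 0 ∘ a2F 0 ∧
    a2F 1 ∘ a2F 1 ∘ a2F 0 ∘ a2F 0 = a2F 0 ∘ a2F 1 ∘ a2F 0 ∘ a2F 0 ∧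
    a2F 1 ∘ a2F 0 ∘ a2F 1 ∘ a2F 0 ∘ a2F 0 = a2F 1 ∘ a2F 1 ∘ a2F 1 ∘ a2F 1 ∧
    a2F 1 ∘ a2F 1 ∘ a2F 1 ∘ a2F 1 = a2F 1 ∘ a2F 1 ∘ a2F 1 ∘ a2F 0 ∧
    (a2F 1 ∘ a2F 0)^[4] = (a2F 1 ∘ a2F 0)^[2] := by
  refine ⟨?_, ?_, ?_, ?_, ?_, ?_, ?_, ?_⟩
  · simp only [a2F, autTrans_comp]
    exact bisim_list _ _ _ _ _ _ [ ((0, (0, 0)), (0, 0)) ] (by decide) (by decide)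
  · simp only [a2F, autTrans_comp]
    exact bisim_list _ _ _ _ _ _ [ ((0, (0, 1)), (0, 0)), ((0, (0, 0)), (0, 0)) ] (by decide) (by decide)
  · simp only [a2F, autTrans_comp]
    exact bisim_list _ _ _ _ _ _ [ ((0, (1, (1, 0))), (0, 0)), ((0, (0, (0, 0))), (0, 0)) ] (by decide) (by decide)
  · simp only [a2F, autTrans_comp]
    exact bisim_list _ _ _ _ _ _ [ ((0, (1, (1, 1))), (0, 0)), ((0, (0, (0, 0))), (0, 0)), ((0, (0, (1, 1))), (0, 0)), ((0, (0, (0, 1))), (0, 0)) ] (by decide) (by decide)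
  · simp only [a2F, autTrans_comp]
    exact bisim_list _ _ _ _ _ _ [ ((1, (1, (0, 0))), (0, (1, (0, 0)))) ] (by decide) (by decide)
  · simp only [a2F, autTrans_comp]
    exact bisim_list _ _ _ _ _ _ [ ((1, (0, (1, (0, 0)))), (1, (1, (1, 1)))), ((0, (0, (1, (0, 0)))), (0, (0, (0, 0)))), ((0, (0, (1, (0, 0)))), (0, (0, (1, 1)))), ((0, (0, (1, (0, 0)))), (0, (0, (0, 1)))), ((0, (0, (1, (0, 0)))), (0, (1, (1, 1)))) ] (by decide) (by decide)
  · simp only [a2F, autTrans_comp]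
    exact bisim_list _ _ _ _ _ _ [ ((1, (1, (1, 1))), (1, (1, (1, 0)))), ((0, (0, (0, 0))), (0, (1, (1, 0)))), ((0, (0, (1, 1))), (0, (1, (1, 0)))), ((0, (0, (0, 1))), (0, (0, (0, 0)))), ((0, (1, (1, 1))), (0, (0, (0, 0)))), ((0, (0, (0, 0))), (0, (0, (0, 0)))), ((0, (0, (1, 1))), (0, (0, (0, 0)))) ] (by decide) (by decide)
  · have h4 : (a2F 1 ∘ a2F 0)^[4] =
        (a2F 1 ∘ a2F 0) ∘ ((a2F 1 ∘ a2F 0) ∘ ((a2F 1 ∘ a2F 0) ∘ (a2F 1 ∘ a2F 0))) := by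
      funext u; rfl
    have h2 : (a2F 1 ∘ a2F 0)^[2] = (a2F 1 ∘ a2F 0) ∘ (a2F 1 ∘ a2F 0) := by
      funext u; rfl
    rw [h4, h2]
    simp only [a2F, autTrans_comp]
    exact bisim_list _ _ _ _ _ _ [ (((1, 0), ((1, 0), ((1, 0), (1, 0)))), ((1, 0), (1, 0))), (((0, 0), ((1, 0), ((0, 0), (1, 0)))), ((0, 0), (1, 0))), (((1, 0), ((0, 0), ((1, 0), (0, 0)))), ((1, 0), (0, 0))), (((0, 0), ((1, 0), ((0, 0), (0, 0)))), ((0, 0), (0, 0))) ] (by decide) (by decide)
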